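/- arXiv:1009.0297 — 4 statements merged into one kernel-verified Lean document; each statement's English description precedes it below -/
import Mathlib

section
/- For h > 0 and integers j, k, the derivative of the shifted sinc function evaluated at a node is (d/dx) S(j,h)(x) |_{x = kh} = 0 if j = k, and equals (1/h)·(-1)^{k-j}/(k-j) if j ≠ k. -/
noncomputable def sinc (z : ℝ) : ℝ :=
  if z = 0 then 1 else Real.sin (Real.pi * z) / (Real.pi * z)

noncomputable def S (k : ℤ) (h : ℝ) (x : ℝ) : ℝ := sinc ((x - k * h) / h)

lemma sinc_even (z : ℝ) : sinc (-z) = sinc z := by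
  unfold sinc
  rcases eq_or_ne z 0 with rfl | hz
  · simp
  · rw [if_neg (neg_ne_zero.mpr hz), if_neg hz]
    rw [mul_neg, Real.sin_neg, neg_div_neg_eq]

lemma hasDerivAt_sinc_int (n : ℤ) (hn : (n : ℝ) ≠ 0) :
    HasDerivAt sinc ((-1 : ℝ) ^ n / n) n := by
  have hπ := Real.pi_ne_zero
  have h1 : HasDerivAt (fun z : ℝ => Real.sin (Real.pi * z) / (Real.pi * z))
      ((-1 : ℝ) ^ n / n) (n : ℝ) := by
    have hs : HasDerivAt (fun z : ℝ => Real.sin (Real.pi * z))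
        (Real.cos (Real.pi * n) * Real.pi) n :=
      (Real.hasDerivAt_sin (Real.pi * n)).comp (n : ℝ)
        (by simpa using (hasDerivAt_id (n : ℝ)).const_mul Real.pi)
    have hd : HasDerivAt (fun z : ℝ => Real.pi * z) Real.pi n := by
      simpa using (hasDerivAt_id (n : ℝ)).const_mul Real.pi
    have hne : Real.pi * (n : ℝ) ≠ 0 := mul_ne_zero hπ hn
    have := hs.div hd hne
    refine this.congr_deriv (Eq.symm ?_)
    rw [mul_comm Real.pi (n : ℝ), Real.sin_int_mul_pi]
    have hcos : Real.cos ((n : ℝ) * Real.pi) = (-1 : ℝ) ^ n := by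
      simpa using Real.cos_int_mul_pi_sub 0 n
    field_simp [hcos]
    rw [hcos]; ring
  refine h1.congr_of_eventuallyEq ?_
  filter_upwards [isOpen_ne.mem_nhds hn] with z hz
  simp [sinc, hz]

theorem sinc_deriv_at_nodes (h : ℝ) (hh : 0 < h) (j k : ℤ) :
    deriv (S j h) (k * h) =
      if j = k then 0 else (1 / h) * ((-1 : ℝ) ^ (k - j) / (k - j)) := by
  have hh' : h ≠ 0 := ne_of_gt hh
  rcases eq_or_ne j k with rfl | hjk
  · rw [if_pos rfl]
    -- S j h is even around j*h
    have hsym : ∀ x : ℝ, S j h (2 * (j * h) - x) = S j h x := by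
      intro x
      unfold S
      rw [show (2 * ((j:ℝ) * h) - x - j * h) / h = -((x - j*h)/h) by ring, sinc_even]
    have := deriv_comp_const_sub (S j h) (2 * ((j:ℝ) * h)) ((j:ℝ) * h)
    simp only [hsym] at this
    have h2 : (2 : ℝ) * (j * h) - j * h = j * h := by ring
    rw [h2] at this
    linarith
  · rw [if_neg hjk]
    have hn : ((k - j : ℤ) : ℝ) ≠ 0 := by
      push_cast
      intro hc
      apply hjk
      have : (j : ℝ) = k := by linarith
      exact_mod_cast this
    have hL : HasDerivAt (fun x : ℝ => (x - j * h) / h) (1 / h) ((k : ℝ) * h) := by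
      simpa using (((hasDerivAt_id ((k:ℝ)*h)).sub_const ((j:ℝ)*h)).div_const h)
    have hval : ((k : ℝ) * h - j * h) / h = (k : ℝ) - (j : ℝ) := by
      field_simp
    have hS : HasDerivAt (S j h) ((-1 : ℝ) ^ (k - j) / ((k - j : ℤ) : ℝ) * (1 / h))
        ((k : ℝ) * h) := by
      have hg : HasDerivAt sinc ((-1 : ℝ) ^ (k - j) / ((k : ℝ) - j))
          (((k : ℝ) * h - j * h) / h) := by
        rw [hval]
        have := hasDerivAt_sinc_int (k - j) hn
        push_cast at this
        exact this
      have := hg.comp ((k:ℝ)*h) hL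
      push_cast
      exact this
    rw [hS.deriv]
    push_cast
    ring
end

section
/- For h > 0 and integers j, k, the second derivative of the shifted sinc function evaluated at a node is (d²/dx²) S(j,h)(x) |_{x = kh} = -π²/(3h²) if j = k, and equals -(2/h²)·(-1)^{k-j}/(k-j)² if j ≠ k. -/
open Real MeasureTheory intervalIntegral Metric

noncomputable def sincD (x : ℝ) : ℝ := ∫ t in (0:ℝ)..1, -(π * t) * Real.sin (π * x * t)

noncomputable def sincD2 (x : ℝ) : ℝ := ∫ t in (0:ℝ)..1, -(π ^ 2 * t ^ 2) * Real.cos (π * x * t)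

lemma sinc_eq_integral : _root_.sinc = fun x => ∫ t in (0:ℝ)..1, Real.cos (π * x * t) := by
  funext x
  rcases eq_or_ne x 0 with rfl | hx
  · simp [_root_.sinc]
  · have hc : π * x ≠ 0 := mul_ne_zero Real.pi_ne_zero hx
    rw [_root_.sinc, if_neg hx]
    have h1 : (∫ t in (0:ℝ)..1, Real.cos (π * x * t)) = (π*x)⁻¹ • ∫ u in (π*x*0)..(π*x*1), Real.cos u :=
      intervalIntegral.integral_comp_mul_left Real.cos hc
    rw [h1, integral_cos]
    simp [smul_eq_mul, div_eq_inv_mul]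

lemma hasDerivAt_sinc (x₀ : ℝ) : HasDerivAt _root_.sinc (sincD x₀) x₀ := by
  rw [sinc_eq_integral]
  refine (intervalIntegral.hasDerivAt_integral_of_dominated_loc_of_deriv_le
    (F := fun x t => Real.cos (π * x * t)) (F' := fun x t => -(π * t) * Real.sin (π * x * t))
    (bound := fun _ => π) (s := Metric.ball x₀ 1) (Metric.ball_mem_nhds x₀ one_pos) ?_ ?_ ?_ ?_ ?_ ?_).2
  · exact Filter.Eventually.of_forall fun x =>
      (Real.continuous_cos.comp (by continuity)).aestronglyMeasurable
  · exact (Real.continuous_cos.comp (by continuity)).intervalIntegrable 0 1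
  · exact ((continuous_const.mul continuous_id).neg.mul
      (Real.continuous_sin.comp (by continuity))).aestronglyMeasurable
  · refine Filter.Eventually.of_forall fun t ht x _ => ?_
    rw [Set.uIoc_of_le (by norm_num : (0:ℝ) ≤ 1)] at ht
    have h1 : |(-(π * t) * Real.sin (π * x * t))| = π * t * |Real.sin (π * x * t)| := by
      rw [abs_mul, abs_neg, abs_of_nonneg (mul_nonneg Real.pi_pos.le ht.1.le)]
    calc ‖-(π * t) * Real.sin (π * x * t)‖ = π * t * |Real.sin (π * x * t)| := h1
      _ ≤ π * 1 * 1 := by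
          apply mul_le_mul (by nlinarith [Real.pi_pos, ht.2] : π * t ≤ π * 1)
            (Real.abs_sin_le_one _) (abs_nonneg _) (by positivity)
      _ = π := by ring
  · exact intervalIntegrable_const
  · refine Filter.Eventually.of_forall fun t _ x _ => ?_
    have h1 : HasDerivAt (fun x : ℝ => π * x * t) (π * t) x := by
      simpa using ((hasDerivAt_id x).const_mul π).mul_const t
    exact h1.cos.congr_deriv (by ring)

lemma hasDerivAt_sincD (x₀ : ℝ) : HasDerivAt sincD (sincD2 x₀) x₀ := by
  refine (intervalIntegral.hasDerivAt_integral_of_dominated_loc_of_deriv_le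
    (F := fun x t => -(π * t) * Real.sin (π * x * t))
    (F' := fun x t => -(π ^ 2 * t ^ 2) * Real.cos (π * x * t))
    (bound := fun _ => π ^ 2) (s := Metric.ball x₀ 1) (Metric.ball_mem_nhds x₀ one_pos) ?_ ?_ ?_ ?_ ?_ ?_).2
  · exact Filter.Eventually.of_forall fun x => (by continuity :
      Continuous fun t : ℝ => -(π * t) * Real.sin (π * x * t)).aestronglyMeasurable
  · exact (by continuity : Continuous fun t : ℝ =>
      -(π * t) * Real.sin (π * x₀ * t)).intervalIntegrable 0 1
  · exact (by continuity : Continuous fun t : ℝ =>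
      -(π ^ 2 * t ^ 2) * Real.cos (π * x₀ * t)).aestronglyMeasurable
  · refine Filter.Eventually.of_forall fun t ht x _ => ?_
    rw [Set.uIoc_of_le (by norm_num : (0:ℝ) ≤ 1)] at ht
    have h1 : ‖(-(π ^ 2 * t ^ 2) * Real.cos (π * x * t))‖
        = π ^ 2 * t ^ 2 * |Real.cos (π * x * t)| := by
      rw [Real.norm_eq_abs, abs_mul, abs_neg, abs_of_nonneg (by positivity : (0:ℝ) ≤ π ^ 2 * t ^ 2)]
    rw [h1]
    have ht1 : t ^ 2 ≤ 1 := by nlinarith [ht.1, ht.2]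
    calc π ^ 2 * t ^ 2 * |Real.cos (π * x * t)| ≤ π ^ 2 * 1 * 1 := by
          apply mul_le_mul (by nlinarith [Real.pi_pos] : π ^ 2 * t ^ 2 ≤ π ^ 2 * 1)
            (Real.abs_cos_le_one _) (abs_nonneg _) (by positivity)
      _ = π ^ 2 := by ring
  · exact intervalIntegrable_const
  · refine Filter.Eventually.of_forall fun t _ x _ => ?_
    have h1 : HasDerivAt (fun x : ℝ => π * x * t) (π * t) x := by
      simpa using ((hasDerivAt_id x).const_mul π).mul_const t
    have := (h1.sin.const_mul (-(π * t)))
    exact this.congr_deriv (by ring)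

lemma deriv2_sinc (x : ℝ) : deriv (deriv _root_.sinc) x = sincD2 x := by
  have h1 : deriv _root_.sinc = sincD := funext fun y => (hasDerivAt_sinc y).deriv
  rw [h1]
  exact (hasDerivAt_sincD x).deriv

lemma integral_sq_cos (c : ℝ) (hc : c ≠ 0) :
    ∫ t in (0:ℝ)..1, -(π ^ 2 * t ^ 2) * Real.cos (c * t)
      = -π ^ 2 * (Real.sin c / c + 2 * Real.cos c / c ^ 2 - 2 * Real.sin c / c ^ 3) := by
  have key : ∀ t ∈ Set.uIcc (0:ℝ) 1,
      HasDerivAt (fun t => -π ^ 2 * (t ^ 2 * Real.sin (c * t) / c + 2 * t * Real.cos (c * t) / c ^ 2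
        - 2 * Real.sin (c * t) / c ^ 3)) (-(π ^ 2 * t ^ 2) * Real.cos (c * t)) t := by
    intro t _
    have hct : HasDerivAt (fun t : ℝ => c * t) c t := by simpa using (hasDerivAt_id t).const_mul c
    have h1 : HasDerivAt (fun t : ℝ => t ^ 2 * Real.sin (c * t) / c)
        ((2 * t * Real.sin (c * t) + t ^ 2 * (Real.cos (c * t) * c)) / c) t := by
      exact ((hasDerivAt_pow 2 t).mul hct.sin).div_const c |>.congr_deriv (by ring)
    have h2 : HasDerivAt (fun t : ℝ => 2 * t * Real.cos (c * t) / c ^ 2)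
        ((2 * Real.cos (c * t) + 2 * t * (-Real.sin (c * t) * c)) / c ^ 2) t := by
      have h2t : HasDerivAt (fun t : ℝ => 2 * t) 2 t := by
        simpa using (hasDerivAt_id t).const_mul 2
      exact ((h2t.mul hct.cos).div_const (c ^ 2)).congr_deriv (by ring)
    have h3 : HasDerivAt (fun t : ℝ => 2 * Real.sin (c * t) / c ^ 3)
        (2 * (Real.cos (c * t) * c) / c ^ 3) t := by
      have := (hct.sin.const_mul 2).div_const (c ^ 3)
      exact this.congr_deriv (by ring)
    have := ((h1.add h2).sub h3).const_mul (-π ^ 2)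
    refine this.congr_deriv ?_
    field_simp
    ring
  have hint : IntervalIntegrable (fun t : ℝ => -(π ^ 2 * t ^ 2) * Real.cos (c * t)) volume 0 1 :=
    (by continuity : Continuous fun t : ℝ => -(π ^ 2 * t ^ 2) * Real.cos (c * t)).intervalIntegrable 0 1
  rw [intervalIntegral.integral_eq_sub_of_hasDerivAt key hint]
  simp

lemma sincD2_int (n : ℤ) :
    sincD2 n = if n = 0 then -π ^ 2 / 3 else -2 * (-1 : ℝ) ^ n / (n : ℝ) ^ 2 := by
  rcases eq_or_ne n 0 with rfl | hn
  · simp only [if_pos rfl]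
    have : sincD2 0 = ∫ t in (0:ℝ)..1, -π ^ 2 * t ^ 2 := by
      unfold sincD2
      congr 1; funext t; simp [Real.cos_zero]
    rw [show ((0:ℤ):ℝ) = 0 by norm_num, this, intervalIntegral.integral_const_mul]
    simp [integral_pow]
    ring
  · rw [if_neg hn]
    have hnR : (n : ℝ) ≠ 0 := Int.cast_ne_zero.mpr hn
    have hc : π * (n : ℝ) ≠ 0 := mul_ne_zero Real.pi_ne_zero hnR
    have h1 : sincD2 n = ∫ t in (0:ℝ)..1, -(π ^ 2 * t ^ 2) * Real.cos ((π * n) * t) := rfl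
    rw [h1, integral_sq_cos _ hc]
    have hsin : Real.sin (π * n) = 0 := by rw [mul_comm]; exact Real.sin_int_mul_pi n
    have hcos : Real.cos (π * n) = (-1 : ℝ) ^ n := by
      have := Real.cos_int_mul_pi_sub 0 n
      simpa [mul_comm] using this
    rw [hsin, hcos]
    field_simp
    ring

theorem sinc_deriv2_at_nodes (h : ℝ) (hh : 0 < h) (j k : ℤ) :
    deriv (deriv (S j h)) (k * h) =
      if j = k then -Real.pi ^ 2 / (3 * h ^ 2)
      else (1 / h ^ 2) * (-2 * (-1 : ℝ) ^ (k - j) / ((k : ℝ) - j) ^ 2) := by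
  have hne : h ≠ 0 := hh.ne'
  have hg : ∀ x : ℝ, HasDerivAt (fun x : ℝ => (x - (j : ℝ) * h) / h) h⁻¹ x := fun x => by
    simpa using ((hasDerivAt_id x).sub_const ((j : ℝ) * h)).div_const h
  have hS : deriv (S j h) = fun x => sincD ((x - (j : ℝ) * h) / h) * h⁻¹ := by
    funext x
    have := (hasDerivAt_sinc ((x - (j : ℝ) * h) / h)).comp x (hg x)
    exact HasDerivAt.deriv (by unfold S; simpa [Function.comp_def] using this)
  rw [hS]
  have hd2 : HasDerivAt (fun x => sincD ((x - (j : ℝ) * h) / h) * h⁻¹)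
      (sincD2 (((k : ℝ) * h - (j : ℝ) * h) / h) * h⁻¹ * h⁻¹) ((k : ℝ) * h) := by
    have := ((hasDerivAt_sincD (((k : ℝ) * h - (j : ℝ) * h) / h)).comp ((k : ℝ) * h) (hg ((k : ℝ) * h))).mul_const h⁻¹
    simpa [Function.comp] using this
  rw [hd2.deriv]
  have hu : ((k : ℝ) * h - (j : ℝ) * h) / h = ((k - j : ℤ) : ℝ) := by
    push_cast
    field_simp
  rw [hu, sincD2_int]
  by_cases hjk : j = k
  · subst hjk
    simp only [sub_self, if_pos rfl, if_pos rfl]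
    simp only [if_true]
    field_simp
  · rw [if_neg (sub_ne_zero_of_ne fun e => hjk e.symm), if_neg hjk]
    push_cast
    set A : ℝ := (-1 : ℝ) ^ (k - j) with hA
    have hkj : (k : ℝ) - (j : ℝ) ≠ 0 := sub_ne_zero_of_ne fun e => hjk (by exact_mod_cast e.symm)
    field_simp
end

section
/- For h > 0 and a nonzero integer k, the limit as x → 0 of (1/x)·(d/dx)[S(k,h)(x) + S(-k,h)(x)] equals -4·(-1)^k/(h²k²). -/
open Real Filter

-- identity: for y ≠ ±kh, S k h y + S (-k) h y = C * (y * sin(πy/h)) / (y² - (kh)²)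
lemma S_pair_eq (h : ℝ) (hh : 0 < h) (k : ℤ) (y : ℝ)
    (h1 : y ≠ k * h) (h2 : y ≠ -(k * h)) :
    S k h y + S (-k) h y =
      (-1 : ℝ) ^ k * (2 * h / π) * (y * Real.sin (π * y / h)) / (y ^ 2 - (k * h) ^ 2) := by
  have hne : (h : ℝ) ≠ 0 := ne_of_gt hh
  have hπ : (π : ℝ) ≠ 0 := Real.pi_ne_zero
  have e1 : (y - k * h) / h ≠ 0 := by
    intro hc; apply h1; have := (div_eq_zero_iff.mp hc).resolve_right hne; linarith
  have e2 : (y - (-k : ℤ) * h) / h ≠ 0 := by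
    intro hc; apply h2
    have := (div_eq_zero_iff.mp hc).resolve_right hne
    push_cast at this ⊢; linarith
  rw [S, S, _root_.sinc, _root_.sinc, if_neg e1, if_neg e2]
  have a1 : π * ((y - k * h) / h) = π * y / h - k * π := by field_simp
  have a2 : π * ((y - (-k : ℤ) * h) / h) = π * y / h - (-k : ℤ) * π := by
    push_cast; field_simp
  rw [a1, a2, Real.sin_sub_int_mul_pi, Real.sin_sub_int_mul_pi]
  have hz : ((-1 : ℝ)) ^ (-k) = (-1 : ℝ) ^ k := by
    rw [zpow_neg]
    rcases Int.even_or_odd k with he | ho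
    · rw [he.neg_one_zpow]; norm_num
    · rw [ho.neg_one_zpow]; norm_num
  rw [hz]
  have d1 : y - k * h ≠ 0 := sub_ne_zero.mpr h1
  have d2 : y - (-k : ℤ) * h ≠ 0 := by push_cast; intro hc; apply h2; linarith
  have d2' : y + k * h ≠ 0 := by push_cast at d2; intro hc; apply d2; linarith
  have dd : y ^ 2 - (k * h) ^ 2 ≠ 0 := by
    have : y ^ 2 - (k * h) ^ 2 = (y - k * h) * (y + k * h) := by ring
    rw [this]; exact mul_ne_zero d1 d2'
  have p1 : π * y - π * h * (k : ℝ) ≠ 0 := by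
    intro hc; apply mul_ne_zero hπ d1; linear_combination hc
  have p2 : π * y + π * h * (k : ℝ) ≠ 0 := by
    intro hc; apply mul_ne_zero hπ d2'; linear_combination hc
  push_cast
  have q1 : π * y / h - (k : ℝ) * π ≠ 0 := a1 ▸ mul_ne_zero hπ e1
  have q2 : π * y / h - -(k : ℝ) * π ≠ 0 := by
    have := a2 ▸ mul_ne_zero hπ e2; push_cast at this; exact this
  rw [div_add_div _ _ q1 q2, div_eq_div_iff (mul_ne_zero q1 q2) dd]
  field_simp
  ring

lemma sin_comp_hasDerivAt (h : ℝ) (x : ℝ) :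
    HasDerivAt (fun y : ℝ => Real.sin (π * y / h)) (Real.cos (π * x / h) * (π / h)) x := by
  have hlin : HasDerivAt (fun y : ℝ => π * y / h) (π / h) x := by
    simpa using ((hasDerivAt_id x).const_mul π).div_const h
  exact (Real.hasDerivAt_sin (π * x / h)).comp x hlin

lemma pair_hasDerivAt (h : ℝ) (hh : 0 < h) (k : ℤ) (x : ℝ)
    (h1 : x ≠ k * h) (h2 : x ≠ -(k * h)) :
    HasDerivAt (fun y => S k h y + S (-k) h y)
      ((-1 : ℝ) ^ k * (2 * h / π) *
        (((Real.sin (π * x / h) + x * (Real.cos (π * x / h) * (π / h))) * (x ^ 2 - (k * h) ^ 2)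
          - x * Real.sin (π * x / h) * (2 * x)) / (x ^ 2 - (k * h) ^ 2) ^ 2)) x := by
  have d1 : x - k * h ≠ 0 := sub_ne_zero.mpr h1
  have d2 : x + k * h ≠ 0 := by intro hc; apply h2; linarith
  have dd : x ^ 2 - (k * h) ^ 2 ≠ 0 := by
    have e : x ^ 2 - (k * h) ^ 2 = (x - k * h) * (x + k * h) := by ring
    rw [e]; exact mul_ne_zero d1 d2
  have hN : HasDerivAt (fun y : ℝ => y * Real.sin (π * y / h))
      (Real.sin (π * x / h) + x * (Real.cos (π * x / h) * (π / h))) x := by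
    exact ((hasDerivAt_id' x).mul (sin_comp_hasDerivAt h x)).congr_deriv (by ring)
  have hD : HasDerivAt (fun y : ℝ => y ^ 2 - (k * h) ^ 2) (2 * x) x := by
    simpa using (hasDerivAt_pow 2 x).sub_const (((k : ℝ) * h) ^ 2)
  have hφ := ((hN.div hD dd).const_mul ((-1 : ℝ) ^ k * (2 * h / π)))
  refine hφ.congr_of_eventuallyEq ?_
  have hev : ∀ᶠ y in nhds x, y ≠ (k : ℝ) * h ∧ y ≠ -((k : ℝ) * h) :=
    (eventually_ne_nhds h1).and (eventually_ne_nhds h2)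
  filter_upwards [hev] with y hy
  rw [S_pair_eq h hh k y hy.1 hy.2]
  simp only [Pi.div_apply]
  ring

theorem sinc_singular_limit_pair (h : ℝ) (hh : 0 < h) (k : ℤ) (hk : k ≠ 0) :
    Filter.Tendsto (fun x : ℝ => (1 / x) * deriv (fun y => S k h y + S (-k) h y) x)
      (nhdsWithin 0 {0}ᶜ)
      (nhds (-4 * (-1 : ℝ) ^ k / (h ^ 2 * (k : ℝ) ^ 2))) := by
  have hne : (h : ℝ) ≠ 0 := ne_of_gt hh
  have hπ : (π : ℝ) ≠ 0 := Real.pi_ne_zero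
  have hkR : (k : ℝ) ≠ 0 := Int.cast_ne_zero.mpr hk
  have hkh : (k : ℝ) * h ≠ 0 := mul_ne_zero hkR hne
  set G : ℝ → ℝ := fun x => (-1 : ℝ) ^ k * (2 * h / π) *
    (((Real.sin (π * x / h) / x + Real.cos (π * x / h) * (π / h)) * (x ^ 2 - ((k : ℝ) * h) ^ 2)
      - 2 * (x * Real.sin (π * x / h))) / (x ^ 2 - ((k : ℝ) * h) ^ 2) ^ 2) with hGdef
  have hev : ∀ᶠ x in nhdsWithin 0 {0}ᶜ,
      (1 / x) * deriv (fun y => S k h y + S (-k) h y) x = G x := by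
    have h1 : ∀ᶠ x in nhdsWithin (0 : ℝ) {0}ᶜ, x ≠ (k : ℝ) * h ∧ x ≠ -((k : ℝ) * h) :=
      eventually_nhdsWithin_of_eventually_nhds
        ((eventually_ne_nhds (Ne.symm hkh)).and
         (eventually_ne_nhds (Ne.symm (neg_ne_zero.mpr hkh))))
    filter_upwards [h1, self_mem_nhdsWithin] with x hx hx0
    have hx0' : x ≠ 0 := hx0
    have dd : x ^ 2 - ((k : ℝ) * h) ^ 2 ≠ 0 := by
      have e : x ^ 2 - ((k : ℝ) * h) ^ 2 = (x - k * h) * (x + k * h) := by ring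
      rw [e]; exact mul_ne_zero (sub_ne_zero.mpr hx.1) (by intro hc; exact hx.2 (by linarith))
    rw [(pair_hasDerivAt h hh k x hx.1 hx.2).deriv, hGdef]
    set s := Real.sin (π * x / h) with hs
    set c2 := Real.cos (π * x / h) * (π / h) with hc2
    set D := x ^ 2 - ((k : ℝ) * h) ^ 2 with hD
    set E := (-1 : ℝ) ^ k * (2 * h / π) with hE
    have key : (s + x * c2) * D - x * s * (2 * x) = x * ((s / x + c2) * D - 2 * (x * s)) := by
      field_simp
    rw [key, mul_div_assoc, mul_left_comm E x, ← mul_assoc, one_div_mul_cancel hx0', one_mul]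
  refine Filter.Tendsto.congr' (Filter.EventuallyEq.symm hev) ?_
  have hslim : Filter.Tendsto (fun x : ℝ => Real.sin (π * x / h) / x)
      (nhdsWithin 0 {0}ᶜ) (nhds (π / h)) := by
    have h0 : HasDerivAt (fun y : ℝ => Real.sin (π * y / h)) (π / h) 0 := by
      simpa using sin_comp_hasDerivAt h 0
    refine (hasDerivAt_iff_tendsto_slope.mp h0).congr fun x => ?_
    simp [slope_def_field]
  have hc : Filter.Tendsto (fun x : ℝ => Real.cos (π * x / h) * (π / h))
      (nhdsWithin 0 {0}ᶜ) (nhds (π / h)) := by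
    have hcont : Continuous fun x : ℝ => Real.cos (π * x / h) * (π / h) := by fun_prop
    simpa using (hcont.tendsto 0).mono_left nhdsWithin_le_nhds
  have hDt : Filter.Tendsto (fun x : ℝ => x ^ 2 - ((k : ℝ) * h) ^ 2)
      (nhdsWithin 0 {0}ᶜ) (nhds (-(((k : ℝ) * h) ^ 2))) := by
    have hcont : Continuous fun x : ℝ => x ^ 2 - ((k : ℝ) * h) ^ 2 := by fun_prop
    have := (hcont.tendsto 0).mono_left (nhdsWithin_le_nhds (s := {(0:ℝ)}ᶜ))
    simpa using this
  have hxs : Filter.Tendsto (fun x : ℝ => x * Real.sin (π * x / h))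
      (nhdsWithin 0 {0}ᶜ) (nhds 0) := by
    have hcont : Continuous fun x : ℝ => x * Real.sin (π * x / h) := by fun_prop
    have := (hcont.tendsto 0).mono_left (nhdsWithin_le_nhds (s := {(0:ℝ)}ᶜ))
    simpa using this
  have hden : (-(((k : ℝ) * h) ^ 2)) ^ 2 ≠ 0 :=
    pow_ne_zero 2 (neg_ne_zero.mpr (pow_ne_zero 2 hkh))
  have hmain : Filter.Tendsto G (nhdsWithin 0 {0}ᶜ)
      (nhds ((-1 : ℝ) ^ k * (2 * h / π) *
        (((π / h + π / h) * (-(((k : ℝ) * h) ^ 2)) - 2 * 0) / (-(((k : ℝ) * h) ^ 2)) ^ 2))) := by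
    rw [hGdef]
    exact (((((hslim.add hc).mul hDt).sub (hxs.const_mul 2)).div (hDt.pow 2) hden).const_mul _)
  convert hmain using 2
  field_simp
  ring
end

section
/- Suppose û : ℝ → ℂ is integrable and satisfies |û(k)| ≤ K e^{-ν|k|} for some constants K, ν > 0. Then the function u(x) = ∫_{-∞}^{∞} e^{ixk} û(k) dk extends to a function analytic on the horizontal strip D_ν = {z ∈ ℂ : |Im z| < ν}. -/
open MeasureTheory Metric Set

lemma integrable_exp_neg_mul_abs'' {a : ℝ} (ha : 0 < a) :
    Integrable (fun x : ℝ => Real.exp (-a * |x|)) := by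
  have h1 : IntegrableOn (fun x : ℝ => Real.exp (-a * |x|)) (Set.Ioi (0:ℝ)) := by
    apply (exp_neg_integrableOn_Ioi 0 ha).congr_fun ?_ measurableSet_Ioi
    intro x hx; simp [abs_of_pos (show (0:ℝ) < x from hx)]
  have h1' : IntegrableOn (fun x : ℝ => Real.exp (-a * |x|)) (Set.Ici (0:ℝ)) := by
    rwa [integrableOn_Ici_iff_integrableOn_Ioi]
  have A : MeasurableEmbedding (fun x : ℝ => -x) :=
    (Homeomorph.neg ℝ).isClosedEmbedding.measurableEmbedding
  have h2 : IntegrableOn (fun x : ℝ => Real.exp (-a * |x|)) (Set.Iic (0:ℝ)) := by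
    have hmap : Measure.map (fun x : ℝ => -x) volume = volume := Measure.map_neg_eq_self _
    have := (A.integrableOn_map_iff
      (f := fun x : ℝ => Real.exp (-a * |x|)) (s := Set.Iic (0:ℝ)) (μ := volume)).mpr ?_
    · rwa [hmap] at this
    · simp only [Function.comp_def, abs_neg]
      have : (fun x : ℝ => -x) ⁻¹' Set.Iic (0:ℝ) = Set.Ici 0 := by
        ext x; simp
      rw [this]; exact h1'
  rw [← integrableOn_univ, ← Set.Iic_union_Ioi (a := (0:ℝ))]
  exact h2.union h1

theorem analytic_extension_of_fourier_decay
    (uhat : ℝ → ℂ) (K ν : ℝ) (hK : 0 < K) (hν : 0 < ν)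
    (hmeas : Measurable uhat)
    (hbound : ∀ k : ℝ, ‖uhat k‖ ≤ K * Real.exp (-ν * |k|)) :
    ∃ U : ℂ → ℂ,
      AnalyticOnNhd ℂ U {z : ℂ | |z.im| < ν} ∧
      ∀ x : ℝ, U (x : ℂ) = ∫ k : ℝ, Complex.exp (Complex.I * x * k) * uhat k := by
  set F : ℂ → ℝ → ℂ := fun z k => Complex.exp (Complex.I * z * k) * uhat k with hF
  refine ⟨fun z => ∫ k : ℝ, F z k, ?_, fun x => rfl⟩
  have hopen : IsOpen {z : ℂ | |z.im| < ν} :=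
    isOpen_lt (continuous_abs.comp Complex.continuous_im) continuous_const
  -- measurability of F z
  have hFmeas : ∀ z : ℂ, AEStronglyMeasurable (F z) volume := by
    intro z
    apply Measurable.aestronglyMeasurable
    exact (Complex.measurable_exp.comp
      ((measurable_const.mul Complex.measurable_ofReal))).mul hmeas
  -- norm of exponential
  have hnorm : ∀ (z : ℂ) (k : ℝ), ‖Complex.exp (Complex.I * z * k)‖
      ≤ Real.exp (|z.im| * |k|) := by
    intro z k
    rw [Complex.norm_exp]
    apply Real.exp_le_exp.mpr
    have : (Complex.I * z * (k:ℂ)).re = -(z.im * k) := by simp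
    rw [this]
    calc -(z.im * k) ≤ |z.im * k| := neg_le_abs _
      _ = |z.im| * |k| := abs_mul _ _
  apply DifferentiableOn.analyticOnNhd ?_ hopen
  intro z₀ hz₀
  simp only [Set.mem_setOf_eq] at hz₀
  set δ : ℝ := (ν - |z₀.im|) / 2 with hδdef
  have hδ : 0 < δ := by rw [hδdef]; linarith
  have hbd : Integrable (fun k : ℝ => K * (2/δ) * Real.exp (-(δ/2) * |k|)) :=
    (integrable_exp_neg_mul_abs'' (by positivity)).const_mul _
  have him : ∀ z ∈ ball z₀ δ, |z.im| ≤ ν - δ := by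
    intro z hz
    have h1 : |z.im - z₀.im| ≤ ‖z - z₀‖ := by
      simpa using Complex.abs_im_le_norm (z - z₀)
    have h2 : ‖z - z₀‖ < δ := mem_ball_iff_norm.mp hz
    have := abs_sub_abs_le_abs_sub z.im z₀.im
    rw [hδdef] at *
    linarith [abs_nonneg z.im]
  -- key norm bound
  have key : ∀ z ∈ ball z₀ δ, ∀ k : ℝ,
      ‖Complex.exp (Complex.I * z * k) * uhat k‖ ≤ K * Real.exp (-δ * |k|) := by
    intro z hz k
    rw [norm_mul]
    calc ‖Complex.exp (Complex.I * z * k)‖ * ‖uhat k‖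
        ≤ Real.exp (|z.im| * |k|) * (K * Real.exp (-ν * |k|)) := by
          apply mul_le_mul (hnorm z k) (hbound k) (norm_nonneg _) (Real.exp_nonneg _)
      _ ≤ Real.exp ((ν - δ) * |k|) * (K * Real.exp (-ν * |k|)) := by
          apply mul_le_mul_of_nonneg_right _ (by positivity)
          exact Real.exp_le_exp.mpr (by nlinarith [abs_nonneg k, him z hz])
      _ = K * Real.exp (-δ * |k|) := by
          have h3 : -ν * |k| + (ν - δ) * |k| = -δ * |k| := by ring
          rw [mul_comm, mul_assoc, ← Real.exp_add, h3]
  have habs : ∀ k : ℝ, |k| ≤ (2/δ) * Real.exp ((δ/2) * |k|) := by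
    intro k
    have h := Real.add_one_le_exp ((δ/2) * |k|)
    have h2 : (δ/2) * |k| ≤ Real.exp ((δ/2) * |k|) := by linarith
    calc |k| = (2/δ) * ((δ/2) * |k|) := by field_simp
      _ ≤ (2/δ) * Real.exp ((δ/2) * |k|) := by gcongr
  set F' : ℂ → ℝ → ℂ := fun z k =>
    Complex.exp (Complex.I * z * k) * (Complex.I * 1 * k) * uhat k with hF'
  have hderiv : ∀ k : ℝ, ∀ z ∈ ball z₀ δ, HasDerivAt (fun z => F z k) (F' z k) z := by
    intro k z _
    have h1 : HasDerivAt (fun z : ℂ => Complex.I * z * (k:ℂ)) (Complex.I * 1 * k) z :=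
      ((hasDerivAt_id z).const_mul Complex.I).mul_const _
    exact (h1.cexp.mul_const (uhat k)).congr_deriv (by ring)
  have keyF' : ∀ z ∈ ball z₀ δ, ∀ k : ℝ,
      ‖F' z k‖ ≤ K * (2/δ) * Real.exp (-(δ/2) * |k|) := by
    intro z hz k
    rw [hF']
    calc ‖Complex.exp (Complex.I * z * k) * (Complex.I * 1 * k) * uhat k‖
        = ‖Complex.exp (Complex.I * z * k) * uhat k‖ * |k| := by
          simp only [norm_mul, Complex.norm_real, Real.norm_eq_abs, Complex.norm_I,
            map_one, one_mul, mul_one]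
          ring
      _ ≤ (K * Real.exp (-δ * |k|)) * ((2/δ) * Real.exp ((δ/2) * |k|)) := by
          apply mul_le_mul (key z hz k) (habs k) (abs_nonneg _) (by positivity)
      _ = K * (2/δ) * Real.exp (-(δ/2) * |k|) := by
          have h3 : -δ * |k| + (δ/2) * |k| = -(δ/2) * |k| := by ring
          rw [mul_mul_mul_comm, ← Real.exp_add, h3]
  have hFint : Integrable (F z₀) volume := by
    apply Integrable.mono' ((integrable_exp_neg_mul_abs'' hδ).const_mul K) (hFmeas z₀)
    exact Filter.Eventually.of_forall fun k => key z₀ (mem_ball_self hδ) k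
  have hF'meas : AEStronglyMeasurable (F' z₀) volume := by
    apply Measurable.aestronglyMeasurable
    exact ((Complex.measurable_exp.comp
      ((measurable_const.mul Complex.measurable_ofReal))).mul
      (measurable_const.mul Complex.measurable_ofReal)).mul hmeas
  have := hasDerivAt_integral_of_dominated_loc_of_deriv_le (ball_mem_nhds z₀ hδ)
    (Filter.Eventually.of_forall hFmeas) hFint hF'meas
    (Filter.Eventually.of_forall fun k => fun z hz => keyF' z hz k) hbd
    (Filter.Eventually.of_forall fun k => fun z hz => hderiv k z hz)
  exact this.2.differentiableAt.differentiableWithinAt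
end
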